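/- Let P and Q be orthogonal projections on a complex Hilbert space H, let δ ∈ (0, 1], and suppose ‖Q − P‖ ≤ 1 − δ. Let B₀ = 2Q − 1, B₁ = 2P − 1, and for t ∈ [0,1] set B(t) = (1 − t)B₀ + tB₁. Then for every t ∈ [0,1], the spectrum of B(t) is contained in [−1, −δ] ∪ [δ, 1]; in particular, each B(t) is invertible. -/
import Mathlib

open scoped ComplexOrder

lemma keyUnit {A : Type*} [NormedRing A] [NormedAlgebra ℂ A] [CompleteSpace A] [NormOneClass A]
    (a e : A) (ha2 : a * a = 1) (han : ‖a‖ ≤ 1) {δ lam : ℝ} (hδ1 : δ ≤ 1)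
    (he : ‖e‖ ≤ 1 - δ) (hlam : |lam| < δ) :
    IsUnit (algebraMap ℂ A lam - (a + e)) := by
  have h1 : |lam| < 1 := lt_of_lt_of_le hlam hδ1
  have hl2 : lam ^ 2 < 1 := by nlinarith [abs_nonneg lam, sq_abs lam]
  set c : ℂ := (lam : ℂ) with hc
  have hcne : c ^ 2 - 1 ≠ 0 := by
    have : ((lam ^ 2 - 1 : ℝ) : ℂ) ≠ 0 := by
      exact_mod_cast sub_ne_zero.mpr (ne_of_lt hl2)
    simpa [hc] using this
  set m : A := algebraMap ℂ A c with hm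
  have hcomm : m * a = a * m := (Algebra.commutes c a).symm ▸ rfl
  set v : A := ((c ^ 2 - 1)⁻¹ : ℂ) • (m + a) with hv
  have huv : (m - a) * v = 1 := by
    rw [hv, mul_smul_comm]
    have : (m - a) * (m + a) = algebraMap ℂ A (c ^ 2 - 1) := by
      have : (m - a) * (m + a) = m * m - a * a + (m * a - a * m) := by noncomm_ring
      rw [this, Algebra.commutes c a, sub_self, add_zero, ha2, hm,
        ← RingHom.map_mul, map_sub, map_one, ← sq]
    rw [this, Algebra.smul_def, ← RingHom.map_mul, inv_mul_cancel₀ hcne, map_one]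
  have hvu : v * (m - a) = 1 := by
    rw [hv, smul_mul_assoc]
    have : (m + a) * (m - a) = algebraMap ℂ A (c ^ 2 - 1) := by
      have : (m + a) * (m - a) = m * m - a * a - (m * a - a * m) := by noncomm_ring
      rw [this, Algebra.commutes c a, sub_self, sub_zero, ha2, hm,
        ← RingHom.map_mul, map_sub, map_one, ← sq]
    rw [this, Algebra.smul_def, ← RingHom.map_mul, inv_mul_cancel₀ hcne, map_one]
  set U : Units A := ⟨m - a, v, huv, hvu⟩ with hU
  have hvnorm : ‖v‖ ≤ (1 - lam ^ 2)⁻¹ * (|lam| + 1) := by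
    have hmn : ‖m‖ = |lam| := by
      rw [hm, norm_algebraMap', hc, Complex.norm_real, Real.norm_eq_abs]
    have h2 : ‖((c ^ 2 - 1)⁻¹ : ℂ)‖ = (1 - lam ^ 2)⁻¹ := by
      rw [norm_inv]
      have : (c ^ 2 - 1 : ℂ) = ((lam ^ 2 - 1 : ℝ) : ℂ) := by push_cast [hc]; ring
      rw [this, Complex.norm_real, Real.norm_eq_abs, abs_of_neg (by linarith : lam ^ 2 - 1 < 0),
        neg_sub]
    calc ‖v‖ ≤ ‖((c ^ 2 - 1)⁻¹ : ℂ)‖ * (‖m‖ + ‖a‖) := by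
          rw [hv, norm_smul]
          gcongr
          exact norm_add_le _ _
      _ ≤ (1 - lam ^ 2)⁻¹ * (|lam| + 1) := by
          rw [h2, hmn]
          have h4 : (0:ℝ) ≤ (1 - lam ^ 2)⁻¹ := by
            have : (0:ℝ) < 1 - lam ^ 2 := by linarith
            positivity
          gcongr
  have hsmall : ‖(↑U⁻¹ : A) * e‖ < 1 := by
    have h3 : ‖(↑U⁻¹ : A) * e‖ ≤ ‖v‖ * ‖e‖ := by
      simpa [hU] using norm_mul_le v e
    have h4 : (0:ℝ) < 1 - lam ^ 2 := by linarith
    have h5 : ‖v‖ * ‖e‖ ≤ (1 - lam ^ 2)⁻¹ * (|lam| + 1) * (1 - δ) := by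
      have he0 := norm_nonneg e
      have hv0 := norm_nonneg v
      have hd0 : (0:ℝ) ≤ 1 - δ := by linarith [abs_nonneg lam]
      exact mul_le_mul hvnorm he he0 (le_trans hv0 hvnorm)
    have h6 : (1 - lam ^ 2)⁻¹ * (|lam| + 1) * (1 - δ) < 1 := by
      rw [inv_mul_eq_div, div_mul_eq_mul_div, div_lt_one h4]
      nlinarith [abs_nonneg lam, sq_abs lam]
    linarith
  have := (U * Units.oneSub ((↑U⁻¹ : A) * e) hsmall).isUnit
  convert this using 1
  rw [Units.val_mul, Units.val_oneSub, mul_sub, mul_one, ← mul_assoc,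
    Units.mul_inv, one_mul]
  simp [hU, hc, hm]
  abel

set_option maxHeartbeats 1000000 in
/-- Let `P, Q` be orthogonal projections on a complex Hilbert space with
`‖Q - P‖ ≤ 1 - δ` for some `δ ∈ (0, 1]`, and let `B t = (1 - t)(2Q - 1) + t(2P - 1)`.
Then for every `t ∈ [0,1]` the spectrum of `B t` is contained in
`[-1, -δ] ∪ [δ, 1]`; in particular each `B t` is invertible. -/
theorem spectrum_path_gap {H : Type*} [NormedAddCommGroup H]
    [InnerProductSpace ℂ H] [CompleteSpace H] (P Q : H →L[ℂ] H)
    (hP : IsIdempotentElem P) (hPs : IsSelfAdjoint P)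
    (hQ : IsIdempotentElem Q) (hQs : IsSelfAdjoint Q)
    (δ : ℝ) (hδ : δ ∈ Set.Ioc (0 : ℝ) 1) (hQP : ‖Q - P‖ ≤ 1 - δ)
    (B₀ B₁ : H →L[ℂ] H) (hB₀ : B₀ = 2 • Q - 1) (hB₁ : B₁ = 2 • P - 1)
    (B : ℝ → (H →L[ℂ] H)) (hB : ∀ t : ℝ, B t = (1 - t) • B₀ + t • B₁) :
    ∀ t ∈ Set.Icc (0 : ℝ) 1,
      spectrum ℂ (B t) ⊆ Complex.ofReal '' (Set.Icc (-1) (-δ) ∪ Set.Icc δ 1) ∧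
        IsUnit (B t) := by
  obtain ⟨hδ0, hδ1⟩ := hδ
  rcases subsingleton_or_nontrivial H with hS | hN
  · haveI : Subsingleton (H →L[ℂ] H) := ⟨fun f g => by ext x; exact Subsingleton.elim _ _⟩
    intro t _
    refine ⟨fun z hz => absurd (spectrum.mem_iff.mp hz)
      (not_not.mpr (isUnit_of_subsingleton _)), isUnit_of_subsingleton _⟩
  · -- squares are one
    have hB₀2 : B₀ * B₀ = 1 := by
      rw [hB₀]
      have h := hQ
      rw [IsIdempotentElem] at h
      calc (2 • Q - 1) * (2 • Q - 1) = 4 • (Q * Q) - 4 • Q + 1 := by noncomm_ring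
        _ = 1 := by rw [h]; abel
    have hB₁2 : B₁ * B₁ = 1 := by
      rw [hB₁]
      have h := hP
      rw [IsIdempotentElem] at h
      calc (2 • P - 1) * (2 • P - 1) = 4 • (P * P) - 4 • P + 1 := by noncomm_ring
        _ = 1 := by rw [h]; abel
    -- self-adjointness
    have hB₀s : IsSelfAdjoint B₀ := by
      rw [hB₀, IsSelfAdjoint, two_smul]
      simp [star_sub, star_add, hQs.star_eq]
    have hB₁s : IsSelfAdjoint B₁ := by
      rw [hB₁, IsSelfAdjoint, two_smul]
      simp [star_sub, star_add, hPs.star_eq]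
    -- norm bounds
    have hB₀n : ‖B₀‖ ≤ 1 := by
      have h := CStarRing.norm_star_mul_self (x := B₀)
      rw [hB₀s.star_eq, hB₀2, norm_one] at h
      nlinarith [norm_nonneg B₀]
    have hB₁n : ‖B₁‖ ≤ 1 := by
      have h := CStarRing.norm_star_mul_self (x := B₁)
      rw [hB₁s.star_eq, hB₁2, norm_one] at h
      nlinarith [norm_nonneg B₁]
    have hPQ : ‖P - Q‖ ≤ 1 - δ := by rw [norm_sub_rev]; exact hQP
    have hd : ‖B₁ - B₀‖ ≤ 2 * (1 - δ) := by
      have h : B₁ - B₀ = (P - Q) + (P - Q) := by rw [hB₀, hB₁]; abel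
      calc ‖B₁ - B₀‖ ≤ ‖P - Q‖ + ‖P - Q‖ := by rw [h]; exact norm_add_le _ _
        _ ≤ 2 * (1 - δ) := by linarith
    intro t ht
    obtain ⟨ht0, ht1⟩ := ht
    have hBts : IsSelfAdjoint (B t) := by
      rw [hB t, IsSelfAdjoint]
      simp [star_add, star_smul, hB₀s.star_eq, hB₁s.star_eq]
    have hBt1 : ‖B t‖ ≤ 1 := by
      rw [hB t]
      calc ‖(1 - t) • B₀ + t • B₁‖ ≤ ‖(1 - t) • B₀‖ + ‖t • B₁‖ := norm_add_le _ _
        _ = |1 - t| * ‖B₀‖ + |t| * ‖B₁‖ := by rw [norm_smul, norm_smul]; simp [Real.norm_eq_abs]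
        _ = (1 - t) * ‖B₀‖ + t * ‖B₁‖ := by
            rw [abs_of_nonneg (by linarith), abs_of_nonneg ht0]
        _ ≤ 1 := by nlinarith [norm_nonneg B₀, norm_nonneg B₁]
    have key : ∀ lam : ℝ, |lam| < δ → IsUnit (algebraMap ℂ (H →L[ℂ] H) lam - B t) := by
      intro lam hlam
      by_cases htc : t ≤ 1 / 2
      · have hEq : B t = B₀ + t • (B₁ - B₀) := by rw [hB t]; module
        have hE : ‖t • (B₁ - B₀)‖ ≤ 1 - δ := by
          rw [norm_smul, Real.norm_eq_abs, abs_of_nonneg ht0]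
          nlinarith [norm_nonneg (B₁ - B₀)]
        rw [hEq]
        exact keyUnit B₀ (t • (B₁ - B₀)) hB₀2 hB₀n hδ1 hE hlam
      · push_neg at htc
        have hEq : B t = B₁ + (1 - t) • (B₀ - B₁) := by rw [hB t]; module
        have hE : ‖(1 - t) • (B₀ - B₁)‖ ≤ 1 - δ := by
          rw [norm_smul, Real.norm_eq_abs, abs_of_nonneg (by linarith), norm_sub_rev]
          nlinarith [norm_nonneg (B₁ - B₀)]
        rw [hEq]
        exact keyUnit B₁ ((1 - t) • (B₀ - B₁)) hB₁2 hB₁n hδ1 hE hlam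
    constructor
    · intro z hz
      have hre : z = z.re := hBts.mem_spectrum_eq_re hz
      have hn : ‖z‖ ≤ ‖B t‖ := spectrum.norm_le_norm_of_mem hz
      have h1 : |z.re| ≤ 1 := by
        have : ‖z‖ = |z.re| := by
          conv_lhs => rw [hre]
          rw [Complex.norm_real, Real.norm_eq_abs]
        linarith
      have h2 : δ ≤ |z.re| := by
        by_contra h
        push_neg at h
        apply spectrum.mem_iff.mp hz
        rw [hre]
        exact key z.re h
      refine ⟨z.re, ?_, hre.symm⟩
      rcases le_abs.mp h2 with h | h
      · right; exact ⟨h, by linarith [abs_le.mp h1]⟩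
      · left; exact ⟨by linarith [abs_le.mp h1], by linarith⟩
    · have h0 := key 0 (by simpa using hδ0)
      rw [Complex.ofReal_zero, map_zero, zero_sub] at h0
      simpa using h0.neg
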